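/- Let r and k be positive integers and let B be a finite simple graph with at least two vertices such that rk_r(B) = k+1 and every nonempty proper induced subgraph of B has r-splitter rank at most k. Then for every vertex s of B, the r-splitter rank of B − s equals exactly k. -/

import Mathlib

open Classical

/-- The closed `r`-neighborhood of `c` inside the induced subgraph `G[A]`:
all vertices of `A` joined to `c` by a walk of length at most `r` staying in `A`. -/
noncomputable def ball {V : Type*} (G : SimpleGraph V) (r : ℕ) (A : Finset V) (c : V) :
    Finset V :=
  A.filter (fun v => ∃ p : G.Walk c v, p.length ≤ r ∧ ∀ x ∈ p.support, x ∈ A)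

/-- The `r`-splitter rank of the induced subgraph `G[A]` (with `rank ∅ = 0`). -/
noncomputable def splitterRank {V : Type*} [DecidableEq V] (G : SimpleGraph V) (r : ℕ)
    (A : Finset V) : ℕ :=
  if _ : A.Nonempty then
    1 + A.attach.sup (fun c =>
      (ball G r A c.1).attach.inf'
        (Finset.attach_nonempty_iff.2 ⟨c.1, Finset.mem_filter.2 ⟨c.2,
          SimpleGraph.Walk.nil, by simp, by simp [c.2]⟩⟩)
        (fun s => splitterRank G r ((ball G r A c.1).erase s.1)))
  else 0
termination_by A.card
decreasing_by
  exact lt_of_lt_of_le (Finset.card_erase_lt_of_mem s.2)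
    (Finset.card_le_card (Finset.filter_subset _ _))

lemma ball_subset {V : Type*} (G : SimpleGraph V) (r : ℕ) (A : Finset V) (c : V) :
    ball G r A c ⊆ A := Finset.filter_subset _ _

lemma mem_ball_self {V : Type*} (G : SimpleGraph V) (r : ℕ) {A : Finset V} {c : V}
    (hc : c ∈ A) : c ∈ ball G r A c :=
  Finset.mem_filter.2 ⟨hc, SimpleGraph.Walk.nil, by simp, by simp [hc]⟩

lemma ball_mono {V : Type*} (G : SimpleGraph V) (r : ℕ) {A B : Finset V} (hAB : A ⊆ B)
    (c : V) : ball G r A c ⊆ ball G r B c := by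
  intro x hx
  rw [ball, Finset.mem_filter] at hx ⊢
  obtain ⟨hxA, p, hp, hsupp⟩ := hx
  exact ⟨hAB hxA, p, hp, fun y hy => hAB (hsupp y hy)⟩

lemma splitterRank_mono {V : Type*} [DecidableEq V] (G : SimpleGraph V) (r : ℕ) :
    ∀ (B : Finset V), ∀ A ⊆ B, splitterRank G r A ≤ splitterRank G r B := by
  intro B
  induction B using Finset.strongInduction with
  | _ B ih =>
    intro A hAB
    by_cases hA : A.Nonempty
    · have hB : B.Nonempty := hA.mono hAB
      rw [splitterRank, splitterRank, dif_pos hA, dif_pos hB]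
      apply Nat.add_le_add_left
      apply Finset.sup_le
      rintro ⟨c, hcA⟩ -
      have hcB : c ∈ B := hAB hcA
      refine le_trans ?_ (Finset.le_sup (Finset.mem_attach _ ⟨c, hcB⟩))
      apply Finset.le_inf'
      rintro ⟨s', hs'B⟩ -
      have hs'inB : s' ∈ B := ball_subset G r B c hs'B
      have hss : (ball G r B c).erase s' ⊂ B := by
        rw [Finset.ssubset_iff_of_subset ((Finset.erase_subset _ _).trans (ball_subset G r B c))]
        exact ⟨s', hs'inB, Finset.notMem_erase _ _⟩
      by_cases hs'A : s' ∈ ball G r A c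
      · refine le_trans (Finset.inf'_le _ (Finset.mem_attach _ ⟨s', hs'A⟩)) ?_
        exact ih _ hss _ (Finset.erase_subset_erase _ (ball_mono G r hAB c))
      · have hc : c ∈ ball G r A c := mem_ball_self G r hcA
        refine le_trans (Finset.inf'_le _ (Finset.mem_attach _ ⟨c, hc⟩)) ?_
        apply ih _ hss
        intro x hx
        have hx' := Finset.mem_of_mem_erase hx
        refine Finset.mem_erase.2 ⟨?_, ball_mono G r hAB c hx'⟩
        rintro rfl; exact hs'A hx'
    · rw [Finset.not_nonempty_iff_eq_empty] at hA
      subst hA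
      rw [splitterRank, dif_neg Finset.not_nonempty_empty]
      exact Nat.zero_le _

/-- In a minimal graph of `r`-splitter rank `k+1`, deleting any vertex yields rank exactly `k`. -/
theorem minimal_all_progressing {V : Type*} [Fintype V] [DecidableEq V]
    (G : SimpleGraph V) (r k : ℕ) (hr : 0 < r) (hk : 0 < k) (h2 : 2 ≤ Fintype.card V)
    (hrk : splitterRank G r Finset.univ = k + 1)
    (hmin : ∀ A : Finset V, A.Nonempty → A ⊂ Finset.univ → splitterRank G r A ≤ k) :
    ∀ s : V, splitterRank G r (Finset.univ.erase s) = k := by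
  intro s
  have huniv : (Finset.univ : Finset V).Nonempty := by
    rw [← Finset.card_pos, Finset.card_univ]; omega
  have hEne : (Finset.univ.erase s).Nonempty := by
    rw [← Finset.card_pos, Finset.card_erase_of_mem (Finset.mem_univ s), Finset.card_univ]
    omega
  have hss : Finset.univ.erase s ⊂ Finset.univ :=
    Finset.erase_ssubset (Finset.mem_univ s)
  refine le_antisymm (hmin _ hEne hss) ?_
  rw [splitterRank, dif_pos huniv, add_comm 1, add_left_inj] at hrk
  obtain ⟨c, -, hc⟩ := (Finset.le_sup_iff (show (⊥ : ℕ) < k from hk)).1 hrk.ge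
  have hall : ∀ s' (h : s' ∈ ball G r Finset.univ c.1),
      k ≤ splitterRank G r ((ball G r Finset.univ c.1).erase s') :=
    fun s' h => le_trans hc (Finset.inf'_le _ (Finset.mem_attach _ ⟨s', h⟩))
  by_cases hs : s ∈ ball G r Finset.univ c.1
  · exact le_trans (hall s hs) (splitterRank_mono G r _ _
      (Finset.erase_subset_erase s (ball_subset G r _ _)))
  · have hsub : ball G r Finset.univ c.1 ⊆ Finset.univ.erase s := by
      intro x hx
      refine Finset.mem_erase.2 ⟨?_, Finset.mem_univ x⟩
      rintro rfl; exact hs hx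
    exact le_trans (hall c.1 (mem_ball_self G r c.2))
      (le_trans (splitterRank_mono G r _ _ (Finset.erase_subset _ _))
        (splitterRank_mono G r _ _ hsub))
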